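/- Let X be a real Hilbert space and Y a finite-dimensional real Hilbert space, A : X → Y a bounded linear operator, and (X_j)_{j∈ℕ} a sequence of closed subspaces of X with X_j ⊆ X_{j+1} for all j, with (ker A)^⊥ ⊆ closure(∪_{j∈ℕ} X_j), and such that the restriction of A to each X_j is surjective onto Y. Let g ∈ Y, suppose A f = g has a solution of norm at most ρ' in X₀, fix τ > 1, and let (η_l, δ_l) be nonnegative null sequences and j_l → ∞ in ℕ; for each l let B_l : X → Y be bounded linear with ‖B_l − A‖ ≤ η_l and g_l ∈ Y with ‖g_l − g‖ ≤ δ_l. For each l define the RESESOP iterates (f_n^l)_{n∈ℕ} in X_{j_l} by: f_0^l ∈ X_{j_l} with ‖f_0^l‖ ≤ ρ' and f_0^l orthogonal (within X_{j_l}) to ker A ∩ X_{j_l}; and, given f_n^l, set w_n^l := B_l f_n^l − g_l; if ‖w_n^l‖ ≤ τ(ρ' η_l + δ_l) set f_{n+1}^l := f_n^l, otherwise set u_n^l := P_{X_{j_l}}(B_l* w_n^l), α_n^l := ⟪w_n^l, g_l⟫, ξ_n^l := (ρ' η_l + δ_l)‖w_n^l‖, t_n^l := (⟪u_n^l, f_n^l⟫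 − (α_n^l + ξ_n^l))/‖u_n^l‖², and f_{n+1}^l := f_n^l − t_n^l u_n^l. Define the exact SESOP iterates (f_n)_{n∈ℕ} in X by: f_0 ∈ (ker A)^⊥ with ‖f_0‖ ≤ ρ'; and, given f_n, set w_n := A f_n − g; if w_n = 0 set f_{n+1} := f_n, otherwise u_n := A* w_n, t_n := (⟪u_n, f_n⟫ − ⟪w_n, g⟫)/‖u_n‖², f_{n+1} := f_n − t_n u_n. Assume f_0^l → f_0 in X as l → ∞, and assume the step sizes t_n^l and t_n are uniformly bounded over all n and l. Then for every fixed n ∈ ℕ, the iterates converge: f_n^l → f_n in X as l → ∞. -/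

import Mathlib

open Filter
open scoped RealInnerProductSpace

theorem aux_proj_tendsto {X : Type*} [NormedAddCommGroup X] [InnerProductSpace ℝ X]
    (Xs : ℕ → Submodule ℝ X) [∀ i, CompleteSpace (Xs i)] (hmono : Monotone Xs) (x : X)
    (hx : x ∈ closure (⋃ i, (Xs i : Set X))) :
    Tendsto (fun i => (Submodule.orthogonalProjectionOnto (Xs i) x : X)) atTop (nhds x) := by
  rw [NormedAddCommGroup.tendsto_atTop]
  intro ε hε
  obtain ⟨a, ha, hax⟩ := Metric.mem_closure_iff.1 hx ε hε
  obtain ⟨i0, hi0⟩ := Set.mem_iUnion.1 ha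
  refine ⟨i0, fun i hi => ?_⟩
  rw [norm_sub_rev]
  calc ‖x - (Submodule.orthogonalProjectionOnto (Xs i) x : X)‖
      = ⨅ v : Xs i, ‖x - v‖ := Submodule.starProjection_minimal x
    _ ≤ ‖x - (⟨a, hmono hi hi0⟩ : Xs i)‖ :=
        ciInf_le ⟨0, Set.forall_mem_range.mpr fun _ => norm_nonneg _⟩ _
    _ < ε := by rw [← dist_eq_norm]; exact hax

theorem aux_proj_norm_le {X : Type*} [NormedAddCommGroup X] [InnerProductSpace ℝ X]
    (K : Submodule ℝ X) [CompleteSpace K] (v : X) :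
    ‖(Submodule.orthogonalProjectionOnto K v : X)‖ ≤ ‖v‖ := by
  calc ‖(Submodule.orthogonalProjectionOnto K v : X)‖ = ‖Submodule.orthogonalProjectionOnto K v‖ := rfl
    _ ≤ ‖Submodule.orthogonalProjectionOnto K‖ * ‖v‖ := (Submodule.orthogonalProjectionOnto K).le_opNorm v
    _ ≤ 1 * ‖v‖ := mul_le_mul_of_nonneg_right (Submodule.orthogonalProjectionOnto_norm_le K) (norm_nonneg _)
    _ = ‖v‖ := one_mul _

theorem aux_norm_adjoint {X Y : Type*} [NormedAddCommGroup X] [InnerProductSpace ℝ X]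
    [CompleteSpace X] [NormedAddCommGroup Y] [InnerProductSpace ℝ Y] [CompleteSpace Y]
    (T : X →L[ℝ] Y) : ‖T.adjoint‖ = ‖T‖ :=
  LinearIsometryEquiv.norm_map ContinuousLinearMap.adjoint T

set_option maxHeartbeats 1000000 in
/-- (Convergence of the RESESOP iterates to the exact SESOP iterates.)
Let `A : X →L[ℝ] Y` with `Y` finite dimensional, `(Xs i)` nested closed subspaces of the
real Hilbert space `X` with `(ker A)ᗮ ⊆ closure (⋃ i, Xs i)` and each restriction of `A`
to `Xs i` surjective. Suppose `A f = g` has a solution of norm at most `ρ'` in `Xs 0`,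
`τ > 1`, `η, δ` are nonnegative null sequences and `j l → ∞`; `‖B l - A‖ ≤ η l`,
`‖gl l - g‖ ≤ δ l`. The RESESOP iterates `f l ·` start at `f l 0 ∈ Xs (j l)` with
`‖f l 0‖ ≤ ρ'`, orthogonal within `Xs (j l)` to `ker A ⊓ Xs (j l)`; with
`w l n = B l (f l n) - gl l`, if `‖w l n‖ ≤ τ(ρ' η l + δ l)` then the iterate is kept,
otherwise it is projected onto the stripe, i.e. `f l (n+1) = f l n - t l n • u l n` with
`u l n = P_{Xs (j l)}((B l)* (w l n))` and
`t l n = (⟪u l n, f l n⟫ - (⟪w l n, gl l⟫ + (ρ' η l + δ l)‖w l n‖))/‖u l n‖²`.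
The exact SESOP iterates `fex` start at `fex 0 ∈ (ker A)ᗮ`, `‖fex 0‖ ≤ ρ'`, with
`wex n = A (fex n) - g`: if `wex n = 0` the iterate is kept, otherwise
`fex (n+1) = fex n - tex n • uex n` with `uex n = A* (wex n)` and
`tex n = (⟪uex n, fex n⟫ - ⟪wex n, g⟫)/‖uex n‖²`. If `f l 0 → fex 0` and the step sizes
`t l n`, `tex n` are uniformly bounded, then `f l n → fex n` as `l → ∞`, for every `n`. -/
theorem resesop_iterates_converge_to_sesop_iterates
    {X Y : Type*} [NormedAddCommGroup X] [InnerProductSpace ℝ X] [CompleteSpace X]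
    [NormedAddCommGroup Y] [InnerProductSpace ℝ Y] [FiniteDimensional ℝ Y]
    (A : X →L[ℝ] Y)
    (Xs : ℕ → Submodule ℝ X) [∀ i, CompleteSpace (Xs i)]
    (hmono : ∀ i, Xs i ≤ Xs (i + 1))
    (hdense : ((LinearMap.ker (A : X →ₗ[ℝ] Y))ᗮ : Set X) ⊆ closure (⋃ i, (Xs i : Set X)))
    (hsurj : ∀ i, ∀ y : Y, ∃ v ∈ Xs i, A v = y)
    (g : Y) (ρ' τ : ℝ) (hτ : 1 < τ)
    (hsol : ∃ z ∈ Xs 0, A z = g ∧ ‖z‖ ≤ ρ')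
    (η δ : ℕ → ℝ) (hη0 : ∀ l, 0 ≤ η l) (hδ0 : ∀ l, 0 ≤ δ l)
    (hηlim : Tendsto η atTop (nhds 0)) (hδlim : Tendsto δ atTop (nhds 0))
    (j : ℕ → ℕ) (hj : Tendsto j atTop atTop)
    (B : ℕ → X →L[ℝ] Y) (hB : ∀ l, ‖B l - A‖ ≤ η l)
    (gl : ℕ → Y) (hgl : ∀ l, ‖gl l - g‖ ≤ δ l)
    -- the RESESOP iterates
    (f : ℕ → ℕ → X)
    (hf0mem : ∀ l, f l 0 ∈ Xs (j l)) (hf0norm : ∀ l, ‖f l 0‖ ≤ ρ')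
    (hf0orth : ∀ l, ∀ v : X, v ∈ Xs (j l) → A v = 0 → ⟪f l 0, v⟫ = 0)
    (w : ℕ → ℕ → Y) (hw : ∀ l n, w l n = B l (f l n) - gl l)
    (u : ℕ → ℕ → X)
    (hu : ∀ l n, u l n = ((Xs (j l)).orthogonalProjectionOnto ((B l).adjoint (w l n)) : X))
    (t : ℕ → ℕ → ℝ)
    (ht : ∀ l n, t l n =
      (⟪u l n, f l n⟫ - (⟪w l n, gl l⟫ + (ρ' * η l + δ l) * ‖w l n‖)) / ‖u l n‖ ^ 2)
    (hstep : ∀ l n,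
      (‖w l n‖ ≤ τ * (ρ' * η l + δ l) → f l (n + 1) = f l n) ∧
      (¬ ‖w l n‖ ≤ τ * (ρ' * η l + δ l) → f l (n + 1) = f l n - t l n • u l n))
    -- the exact SESOP iterates
    (fex : ℕ → X) (hfex0 : fex 0 ∈ (LinearMap.ker (A : X →ₗ[ℝ] Y))ᗮ) (hfex0norm : ‖fex 0‖ ≤ ρ')
    (wex : ℕ → Y) (hwex : ∀ n, wex n = A (fex n) - g)
    (uex : ℕ → X) (huex : ∀ n, uex n = A.adjoint (wex n))
    (tex : ℕ → ℝ)
    (htex : ∀ n, tex n = (⟪uex n, fex n⟫ - ⟪wex n, g⟫) / ‖uex n‖ ^ 2)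
    (hexstep : ∀ n,
      (wex n = 0 → fex (n + 1) = fex n) ∧
      (wex n ≠ 0 → fex (n + 1) = fex n - tex n • uex n))
    -- convergence of the start iterates and uniform boundedness of the step sizes
    (hstart : Tendsto (fun l => f l 0) atTop (nhds (fex 0)))
    (C : ℝ) (hC : ∀ l n, |t l n| ≤ C) (hCex : ∀ n, |tex n| ≤ C) :
    ∀ n, Tendsto (fun l => f l n) atTop (nhds (fex n)) := by
  
  have hC0 : (0:ℝ) ≤ C := le_trans (abs_nonneg _) (hC 0 0)
  have hmono' : Monotone Xs := monotone_nat_of_le_succ hmono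
  have hglg : Tendsto gl atTop (nhds g) :=
    tendsto_iff_norm_sub_tendsto_zero.2
      (squeeze_zero (fun l => norm_nonneg _) hgl hδlim)
  have hηδ : Tendsto (fun l => ρ' * η l + δ l) atTop (nhds 0) := by
    simpa using (hηlim.const_mul ρ').add hδlim
  have hBA : Tendsto (fun l => ‖B l - A‖) atTop (nhds 0) :=
    squeeze_zero (fun l => norm_nonneg _) hB hηlim
  intro n
  induction n with
  | zero => exact hstart
  | succ n ih =>
    -- convergence of the residuals
    have hwt : Tendsto (fun l => w l n) atTop (nhds (wex n)) := by
      have h1 : Tendsto (fun l => (B l - A) (f l n)) atTop (nhds 0) := by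
        rw [tendsto_zero_iff_norm_tendsto_zero]
        refine squeeze_zero (fun l => norm_nonneg _)
          (fun l => (B l - A).le_opNorm (f l n)) ?_
        simpa using hBA.mul ih.norm
      have h2 : Tendsto (fun l => A (f l n) - gl l) atTop (nhds (A (fex n) - g)) :=
        ((A.continuous.tendsto (fex n)).comp ih).sub hglg
      have heq : ∀ l, w l n = (B l - A) (f l n) + (A (f l n) - gl l) := by
        intro l
        rw [hw]
        simp [ContinuousLinearMap.sub_apply]
      rw [hwex]
      refine Tendsto.congr (fun l => (heq l).symm) ?_
      simpa using h1.add h2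
    -- convergence of the adjoints applied to the residuals
    have hadjt : Tendsto (fun l => (B l).adjoint (w l n)) atTop
        (nhds (A.adjoint (wex n))) := by
      have h1 : Tendsto (fun l => (B l - A).adjoint (w l n)) atTop (nhds 0) := by
        rw [tendsto_zero_iff_norm_tendsto_zero]
        refine squeeze_zero (g := fun l => ‖B l - A‖ * ‖w l n‖)
          (fun l => norm_nonneg _) (fun l => ?_) ?_
        · calc ‖(B l - A).adjoint (w l n)‖
              ≤ ‖(B l - A).adjoint‖ * ‖w l n‖ := (B l - A).adjoint.le_opNorm _
            _ = ‖B l - A‖ * ‖w l n‖ := by rw [aux_norm_adjoint]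
        · simpa using hBA.mul hwt.norm
      have h2 : Tendsto (fun l => A.adjoint (w l n)) atTop (nhds (A.adjoint (wex n))) :=
        (A.adjoint.continuous.tendsto _).comp hwt
      have heq : ∀ l, (B l).adjoint (w l n)
          = (B l - A).adjoint (w l n) + A.adjoint (w l n) := by
        intro l
        rw [map_sub]
        simp [ContinuousLinearMap.sub_apply]
      refine Tendsto.congr (fun l => (heq l).symm) ?_
      simpa using h1.add h2
    -- `uex n` lies in `(ker A)ᗮ`
    have huexmem : uex n ∈ (LinearMap.ker (A : X →ₗ[ℝ] Y))ᗮ := by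
      rw [Submodule.mem_orthogonal']
      intro v hv
      have hv0 : A v = 0 := hv
      rw [huex, ContinuousLinearMap.adjoint_inner_left, hv0, inner_zero_right]
    have hP : Tendsto (fun l => (Submodule.orthogonalProjectionOnto (Xs (j l)) (uex n) : X)) atTop
        (nhds (uex n)) :=
      (aux_proj_tendsto Xs hmono' (uex n) (hdense huexmem)).comp hj
    -- convergence of the search directions
    have hut : Tendsto (fun l => u l n) atTop (nhds (uex n)) := by
      have hdiff : Tendsto (fun l =>
          (Submodule.orthogonalProjectionOnto (Xs (j l)) ((B l).adjoint (w l n)) : X)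
          - (Submodule.orthogonalProjectionOnto (Xs (j l)) (uex n) : X)) atTop (nhds 0) := by
        rw [tendsto_zero_iff_norm_tendsto_zero]
        refine squeeze_zero (g := fun l => ‖(B l).adjoint (w l n) - uex n‖)
          (fun l => norm_nonneg _) (fun l => ?_) ?_
        · calc ‖(Submodule.orthogonalProjectionOnto (Xs (j l)) ((B l).adjoint (w l n)) : X)
                - (Submodule.orthogonalProjectionOnto (Xs (j l)) (uex n) : X)‖
              = ‖(Submodule.orthogonalProjectionOnto (Xs (j l)) ((B l).adjoint (w l n) - uex n) : X)‖ := by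
                rw [map_sub, Submodule.coe_sub]
            _ ≤ ‖(B l).adjoint (w l n) - uex n‖ := aux_proj_norm_le _ _
        · rw [← tendsto_zero_iff_norm_tendsto_zero]
          simpa [huex n] using hadjt.sub (tendsto_const_nhds (x := A.adjoint (wex n)))
      have := hdiff.add hP
      refine Tendsto.congr (fun l => ?_) (by simpa using this)
      rw [hu]; rfl
    by_cases hwn : wex n = 0
    · -- exact residual vanishes: both iterates stay put (up to vanishing corrections)
      have hfexn : fex (n + 1) = fex n := (hexstep n).1 hwn
      have huex0 : uex n = 0 := by rw [huex, hwn, map_zero]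
      have hd : Tendsto (fun l => f l (n + 1) - f l n) atTop (nhds 0) := by
        rw [tendsto_zero_iff_norm_tendsto_zero]
        refine squeeze_zero (g := fun l => C * ‖u l n‖)
          (fun l => norm_nonneg _) (fun l => ?_) ?_
        · rcases le_or_gt ‖w l n‖ (τ * (ρ' * η l + δ l)) with h | h
          · rw [(hstep l n).1 h]
            simp only [sub_self, norm_zero]
            positivity
          · rw [(hstep l n).2 (not_le.2 h)]
            have heq : f l n - t l n • u l n - f l n = -(t l n • u l n) := by abel
            rw [heq, norm_neg, norm_smul, Real.norm_eq_abs]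
            exact mul_le_mul_of_nonneg_right (hC l n) (norm_nonneg _)
        · have h4 := (tendsto_const_nhds (x := C)).mul hut.norm
          rw [huex0, norm_zero, mul_zero] at h4
          exact h4
      rw [hfexn]
      have := hd.add ih
      refine Tendsto.congr (fun l => ?_) (by simpa using this)
      abel
    · -- exact residual nonzero: eventually the regularized step is taken
      have huexne : uex n ≠ 0 := by
        intro h0
        apply hwn
        obtain ⟨z, hz0, hzg, -⟩ := hsol
        have h1 : wex n = A (fex n - z) := by rw [hwex, map_sub, hzg]
        have h2 : ⟪wex n, wex n⟫ = 0 := by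
          calc ⟪wex n, wex n⟫ = ⟪wex n, A (fex n - z)⟫ := by rw [← h1]
            _ = ⟪A.adjoint (wex n), fex n - z⟫ :=
                (ContinuousLinearMap.adjoint_inner_left A _ _).symm
            _ = 0 := by rw [← huex, h0, inner_zero_left]
        exact inner_self_eq_zero.1 h2
      have hune : ‖uex n‖ ^ 2 ≠ 0 := pow_ne_zero _ (norm_ne_zero_iff.2 huexne)
      have htt : Tendsto (fun l => t l n) atTop (nhds (tex n)) := by
        have h1 := hut.inner (𝕜 := ℝ) ih
        have h2 := hwt.inner (𝕜 := ℝ) hglg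
        have h3 : Tendsto (fun l => (ρ' * η l + δ l) * ‖w l n‖) atTop (nhds 0) := by
          simpa using hηδ.mul hwt.norm
        have hnum : Tendsto (fun l =>
            ⟪u l n, f l n⟫ - (⟪w l n, gl l⟫ + (ρ' * η l + δ l) * ‖w l n‖)) atTop
            (nhds (⟪uex n, fex n⟫ - ⟪wex n, g⟫)) := by
          simpa using h1.sub (h2.add h3)
        have hden : Tendsto (fun l => ‖u l n‖ ^ 2) atTop (nhds (‖uex n‖ ^ 2)) :=
          hut.norm.pow 2
        rw [htex n]
        exact Tendsto.congr (fun l => (ht l n).symm) (hnum.div hden hune)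
      have hev : ∀ᶠ l in atTop, f l (n + 1) = f l n - t l n • u l n := by
        have h0 : Tendsto (fun l => τ * (ρ' * η l + δ l)) atTop (nhds 0) := by
          simpa using hηδ.const_mul τ
        have hpos : (0:ℝ) < ‖wex n‖ := norm_pos_iff.2 hwn
        filter_upwards [h0.eventually_lt hwt.norm hpos] with l hl
        exact (hstep l n).2 (not_le.2 hl)
      rw [(hexstep n).2 hwn]
      exact Tendsto.congr' (by filter_upwards [hev] with l hl using hl.symm)
        (ih.sub (htt.smul hut))
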